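/- Let G be the symmetric group on 8 letters and let H be a Sylow 2-subgroup of G. Then there exist x, y ∈ G such that H ∩ xHx⁻¹ ∩ yHy⁻¹ is the trivial subgroup. -/

import Mathlib

open Pointwise

namespace Stmt9Aux

abbrev G8 := Equiv.Perm (Fin 8)

/-- partner function: i XOR 1 -/
def pf : Fin 8 → Fin 8
  | 0 => 1 | 1 => 0 | 2 => 3 | 3 => 2 | 4 => 5 | 5 => 4 | 6 => 7 | 7 => 6

/-- element of H0 determined by values at 0,2,4,6 -/
def g8 (a b c d : Fin 8) : Fin 8 → Fin 8
  | 0 => a | 1 => pf a | 2 => b | 3 => pf b | 4 => c | 5 => pf c | 6 => d | 7 => pf d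

def P (σ : G8) : Prop :=
  ∀ i j : Fin 8,
    ((σ i).val / 2 = (σ j).val / 2 ↔ i.val / 2 = j.val / 2) ∧
    ((σ i).val / 4 = (σ j).val / 4 ↔ i.val / 4 = j.val / 4)

instance : DecidablePred P := fun σ => by unfold P; infer_instance

def H0 : Subgroup G8 where
  carrier := {σ | P σ}
  one_mem' := fun i j => by simp
  mul_mem' := by
    intro σ τ hσ hτ i j
    refine ⟨Iff.trans ?_ (hτ i j).1, Iff.trans ?_ (hτ i j).2⟩
    · exact (hσ (τ i) (τ j)).1
    · exact (hσ (τ i) (τ j)).2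
  inv_mem' := by
    intro σ hσ i j
    have h := hσ (σ⁻¹ i) (σ⁻¹ j)
    simp only [Equiv.Perm.inv_def, Equiv.apply_symm_apply] at h
    exact ⟨h.1.symm, h.2.symm⟩

instance : DecidablePred (· ∈ H0) := fun σ => inferInstanceAs (Decidable (P σ))

lemma mem_H0_iff {σ : G8} : σ ∈ H0 ↔ P σ := Iff.rfl

def C (a b c d : Fin 8) : Prop :=
  a.val / 4 = b.val / 4 ∧ a.val / 2 ≠ b.val / 2 ∧ c.val / 4 = d.val / 4 ∧
    c.val / 2 ≠ d.val / 2 ∧ a.val / 4 ≠ c.val / 4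

instance : ∀ a b c d : Fin 8, Decidable (C a b c d) := fun a b c d => by
  unfold C; infer_instance

lemma pairL : ∀ u v : Fin 8, u.val / 2 = v.val / 2 → u ≠ v → v = pf u := by decide

lemma valA (σ : G8) (h : P σ) : ∀ i, σ i = g8 (σ 0) (σ 2) (σ 4) (σ 6) i := by
  have h1 : σ 1 = pf (σ 0) :=
    pairL _ _ ((h 0 1).1.mpr rfl) (σ.injective.ne (by decide))
  have h3 : σ 3 = pf (σ 2) :=
    pairL _ _ ((h 2 3).1.mpr rfl) (σ.injective.ne (by decide))
  have h5 : σ 5 = pf (σ 4) :=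
    pairL _ _ ((h 4 5).1.mpr rfl) (σ.injective.ne (by decide))
  have h7 : σ 7 = pf (σ 6) :=
    pairL _ _ ((h 6 7).1.mpr rfl) (σ.injective.ne (by decide))
  intro i
  match i with
  | 0 => rfl
  | 1 => exact h1
  | 2 => rfl
  | 3 => exact h3
  | 4 => rfl
  | 5 => exact h5
  | 6 => rfl
  | 7 => exact h7

lemma condA (σ : G8) (h : P σ) : C (σ 0) (σ 2) (σ 4) (σ 6) :=
  ⟨(h 0 2).2.mpr rfl,
   fun e => absurd ((h 0 2).1.mp e) (by decide),
   (h 4 6).2.mpr rfl,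
   fun e => absurd ((h 4 6).1.mp e) (by decide),
   fun e => absurd ((h 0 4).2.mp e) (by decide)⟩

lemma injG : ∀ a b c d : Fin 8, C a b c d → Function.Injective (g8 a b c d) := by decide

lemma PG : ∀ a b c d : Fin 8, C a b c d → ∀ i j : Fin 8,
    ((g8 a b c d i).val / 2 = (g8 a b c d j).val / 2 ↔ i.val / 2 = j.val / 2) ∧
    ((g8 a b c d i).val / 4 = (g8 a b c d j).val / 4 ↔ i.val / 4 = j.val / 4) := by decide

def T := {v : Fin 8 × Fin 8 × Fin 8 × Fin 8 // C v.1 v.2.1 v.2.2.1 v.2.2.2}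

instance : DecidablePred fun v : Fin 8 × Fin 8 × Fin 8 × Fin 8 =>
    C v.1 v.2.1 v.2.2.1 v.2.2.2 := fun _ => by infer_instance

instance : Fintype T := by unfold T; infer_instance

noncomputable def eH : H0 ≃ T where
  toFun := fun σ => ⟨(σ.1 0, σ.1 2, σ.1 4, σ.1 6), condA σ.1 σ.2⟩
  invFun := fun v =>
    ⟨Equiv.ofBijective (g8 v.1.1 v.1.2.1 v.1.2.2.1 v.1.2.2.2)
      (Finite.injective_iff_bijective.mp (injG _ _ _ _ v.2)),
     fun i j => PG _ _ _ _ v.2 i j⟩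
  left_inv := fun σ => Subtype.ext (Equiv.ext fun i => (valA σ.1 σ.2 i).symm)
  right_inv := fun v => Subtype.ext rfl

set_option maxRecDepth 100000 in
lemma cardT : Fintype.card T = 128 := by decide

lemma cardH0 : Nat.card H0 = 128 := by
  rw [Nat.card_eq_fintype_card, Fintype.card_congr eH, cardT]

lemma cardG : Nat.card G8 = 40320 := by
  rw [Nat.card_eq_fintype_card, Fintype.card_perm]
  decide

lemma factorizationG : (Nat.card G8).factorization 2 = 7 := by
  rw [cardG, show (40320 : ℕ) = 2 ^ 7 * 315 by norm_num,
    Nat.factorization_mul (by norm_num) (by norm_num)]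
  rw [Nat.Prime.factorization_pow Nat.prime_two]
  simp [Nat.factorization_eq_zero_of_not_dvd (by norm_num : ¬ (2:ℕ) ∣ 315)]

def S0 : Sylow 2 G8 :=
  Sylow.ofCard H0 (by rw [cardH0, factorizationG]; norm_num)

lemma coeS0 : (S0 : Subgroup G8) = H0 := rfl

/-- the 8-cycle -/
def x0 : G8 :=
  ⟨fun i => match i with
    | 0 => 1 | 1 => 2 | 2 => 3 | 3 => 4 | 4 => 5 | 5 => 6 | 6 => 7 | 7 => 0,
   fun i => match i with
    | 0 => 7 | 1 => 0 | 2 => 1 | 3 => 2 | 4 => 3 | 5 => 4 | 6 => 5 | 7 => 6,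
   by decide, by decide⟩

/-- the swap (5 6) -/
def y0 : G8 :=
  ⟨fun i => match i with
    | 0 => 0 | 1 => 1 | 2 => 2 | 3 => 3 | 4 => 4 | 5 => 6 | 6 => 5 | 7 => 7,
   fun i => match i with
    | 0 => 0 | 1 => 1 | 2 => 2 | 3 => 3 | 4 => 4 | 5 => 6 | 6 => 5 | 7 => 7,
   by decide, by decide⟩

set_option maxRecDepth 100000 in
lemma key2 : ∀ a b c d : Fin 8, C a b c d →
    (∀ i j : Fin 8,
      ((x0⁻¹ (g8 a b c d (x0 i))).val / 2 = (x0⁻¹ (g8 a b c d (x0 j))).val / 2 ↔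
        i.val / 2 = j.val / 2) ∧
      ((x0⁻¹ (g8 a b c d (x0 i))).val / 4 = (x0⁻¹ (g8 a b c d (x0 j))).val / 4 ↔
        i.val / 4 = j.val / 4)) →
    (∀ i j : Fin 8,
      ((y0⁻¹ (g8 a b c d (y0 i))).val / 2 = (y0⁻¹ (g8 a b c d (y0 j))).val / 2 ↔
        i.val / 2 = j.val / 2) ∧
      ((y0⁻¹ (g8 a b c d (y0 i))).val / 4 = (y0⁻¹ (g8 a b c d (y0 j))).val / 4 ↔
        i.val / 4 = j.val / 4)) →
    a = 0 ∧ b = 2 ∧ c = 4 ∧ d = 6 := by decide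

lemma key (τ : G8) (h1 : P τ) (h2 : P (x0⁻¹ * τ * x0)) (h3 : P (y0⁻¹ * τ * y0)) :
    τ = 1 := by
  obtain ⟨a, ha⟩ : ∃ a, τ 0 = a := ⟨_, rfl⟩
  obtain ⟨b, hb⟩ : ∃ b, τ 2 = b := ⟨_, rfl⟩
  obtain ⟨c, hc⟩ : ∃ c, τ 4 = c := ⟨_, rfl⟩
  obtain ⟨d, hd⟩ : ∃ d, τ 6 = d := ⟨_, rfl⟩
  have hv : ∀ i, τ i = g8 a b c d i := by
    rw [← ha, ← hb, ← hc, ← hd]; exact valA τ h1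
  have hC : C a b c d := by
    rw [← ha, ← hb, ← hc, ← hd]; exact condA τ h1
  have h2' : ∀ i j : Fin 8,
      ((x0⁻¹ (g8 a b c d (x0 i))).val / 2 =
        (x0⁻¹ (g8 a b c d (x0 j))).val / 2 ↔ i.val / 2 = j.val / 2) ∧
      ((x0⁻¹ (g8 a b c d (x0 i))).val / 4 =
        (x0⁻¹ (g8 a b c d (x0 j))).val / 4 ↔ i.val / 4 = j.val / 4) := by
    intro i j
    simpa only [Equiv.Perm.mul_apply, hv] using h2 i j
  have h3' : ∀ i j : Fin 8,
      ((y0⁻¹ (g8 a b c d (y0 i))).val / 2 =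
        (y0⁻¹ (g8 a b c d (y0 j))).val / 2 ↔ i.val / 2 = j.val / 2) ∧
      ((y0⁻¹ (g8 a b c d (y0 i))).val / 4 =
        (y0⁻¹ (g8 a b c d (y0 j))).val / 4 ↔ i.val / 4 = j.val / 4) := by
    intro i j
    simpa only [Equiv.Perm.mul_apply, hv] using h3 i j
  obtain ⟨ha', hb', hc', hd'⟩ := key2 a b c d hC h2' h3'
  have hfin : ∀ i : Fin 8, g8 0 2 4 6 i = i := by decide
  refine Equiv.ext fun i => ?_
  rw [hv i, ha', hb', hc', hd', hfin i]
  rfl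

end Stmt9Aux

open Stmt9Aux

/-- If `H` is a Sylow `2`-subgroup of the symmetric group `S₈`, then there exist
`x, y` with `H ∩ xHx⁻¹ ∩ yHy⁻¹ = 1`. -/
theorem stmt9 (H : Sylow 2 (Equiv.Perm (Fin 8))) :
    ∃ x y : Equiv.Perm (Fin 8),
      (H : Subgroup (Equiv.Perm (Fin 8))) ⊓
        (H : Subgroup (Equiv.Perm (Fin 8))).map (MulAut.conj x).toMonoidHom ⊓
        (H : Subgroup (Equiv.Perm (Fin 8))).map (MulAut.conj y).toMonoidHom = ⊥ := by
  obtain ⟨g, hg⟩ := MulAction.exists_smul_eq (Equiv.Perm (Fin 8)) S0 H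
  have hH : (H : Subgroup (Equiv.Perm (Fin 8))) = MulAut.conj g • (H0 : Subgroup G8) := by
    rw [← hg]; rfl
  refine ⟨g * x0 * g⁻¹, g * y0 * g⁻¹, ?_⟩
  rw [eq_bot_iff]
  intro σ hσ
  rw [Subgroup.mem_inf, Subgroup.mem_inf] at hσ
  obtain ⟨⟨hσ1, hσ2⟩, hσ3⟩ := hσ
  rw [hH, Subgroup.mem_pointwise_smul_iff_inv_smul_mem] at hσ1
  rw [Subgroup.mem_map_equiv, hH, Subgroup.mem_pointwise_smul_iff_inv_smul_mem] at hσ2 hσ3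
  rw [MulAut.smul_def, MulAut.conj_inv_apply] at hσ1 hσ2 hσ3
  rw [MulAut.conj_symm_apply] at hσ2 hσ3
  set τ : G8 := g⁻¹ * σ * g with hτ
  have h1 : P τ := hσ1
  have h2 : P (x0⁻¹ * τ * x0) := by
    have e2 : g⁻¹ * ((g * x0 * g⁻¹)⁻¹ * σ * (g * x0 * g⁻¹)) * g = x0⁻¹ * τ * x0 := by
      rw [hτ]; group
    rw [← e2]; exact hσ2
  have h3 : P (y0⁻¹ * τ * y0) := by
    have e3 : g⁻¹ * ((g * y0 * g⁻¹)⁻¹ * σ * (g * y0 * g⁻¹)) * g = y0⁻¹ * τ * y0 := by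
      rw [hτ]; group
    rw [← e3]; exact hσ3
  have hτ1 : τ = 1 := key τ h1 h2 h3
  have hσ0 : σ = 1 := by
    have := hτ1
    rw [hτ] at this
    calc σ = g * (g⁻¹ * σ * g) * g⁻¹ := by group
    _ = g * 1 * g⁻¹ := by rw [this]
    _ = 1 := by group
  rw [hσ0]
  exact Subgroup.one_mem ⊥
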